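/- With φ = φ_{m,k} defined by φ(A_i) = A_1⋯A_{i-1}A_i A_{i-1}^{-1}⋯A_1^{-1} and φ(B_j) = A_1⋯A_m(B_1⋯B_j)A_{j-1}^{-1}⋯A_1^{-1}, for every n ≥ 1 and every 1 ≤ j ≤ k there exists a positive word u (a product of the generators A_i, B_l with no inverses) such that φ^n(B_j) = A_1^n ⋯ A_m^n · u · B_j · A_{j-1}^{-n} ⋯ A_1^{-n}. -/

import Mathlib

/-- The free group on generators `A_0, A_1, …` and `B_0, B_1, …` (0-indexed versions
of the generators `A_1, …, A_m, B_1, …, B_k` of Brady–Soroko). -/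
abbrev FG := FreeGroup (ℕ ⊕ ℕ)

/-- The generator `A_{i+1}` (0-indexed as `A i`). -/
def A (i : ℕ) : FG := FreeGroup.of (Sum.inl i)

/-- The generator `B_{j+1}` (0-indexed as `B j`). -/
def B (j : ℕ) : FG := FreeGroup.of (Sum.inr j)

/-- The product `A_1 A_2 ⋯ A_n` (i.e. `A 0 * A 1 * ⋯ * A (n-1)`). -/
def aProd (n : ℕ) : FG := ((List.range n).map A).prod

/-- The product `B_1 B_2 ⋯ B_n` (i.e. `B 0 * B 1 * ⋯ * B (n-1)`). -/
def bProd (n : ℕ) : FG := ((List.range n).map B).prod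

/-- The Brady–Soroko endomorphism `φ_{m,·}`, determined by
`φ(A_i) = A_1 ⋯ A_{i-1} · A_i · (A_1 ⋯ A_{i-1})⁻¹` and
`φ(B_j) = A_1 ⋯ A_m · (B_1 ⋯ B_j) · (A_1 ⋯ A_{j-1})⁻¹`. -/
def bsPhi (m : ℕ) : FG →* FG :=
  FreeGroup.lift (fun x => match x with
    | Sum.inl i => aProd i * A i * (aProd i)⁻¹
    | Sum.inr j => aProd m * bProd (j + 1) * (aProd j)⁻¹)

namespace BS

lemma phi_A (m i : ℕ) : bsPhi m (A i) = aProd i * A i * (aProd i)⁻¹ := by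
  simp [bsPhi, A, FreeGroup.lift_apply_of]

lemma phi_B (m j : ℕ) : bsPhi m (B j) = aProd m * bProd (j + 1) * (aProd j)⁻¹ := by
  simp [bsPhi, B, FreeGroup.lift_apply_of]

lemma aProd_succ (i : ℕ) : aProd (i + 1) = aProd i * A i := by
  simp [aProd, List.range_succ]

lemma bProd_succ (j : ℕ) : bProd (j + 1) = bProd j * B j := by
  simp [bProd, List.range_succ]

/-- `seg a b = A a * A (a+1) * ⋯ * A (b-1)`. -/
def seg (a b : ℕ) : FG := ((List.range' a (b - a)).map A).prod

lemma aProd_mul_seg {a b : ℕ} (h : a ≤ b) : aProd a * seg a b = aProd b := by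
  have : List.range' 0 a ++ List.range' a (b - a) = List.range' 0 b := by
    have := List.range'_append (s := 0) (m := a) (n := b - a) (step := 1)
    simpa [Nat.add_sub_cancel' h, Nat.add_comm] using this
  simp only [aProd, seg, List.range_eq_range']
  rw [← List.prod_append, ← List.map_append, this]

lemma seg_mul_seg {a b c : ℕ} (h1 : a ≤ b) (h2 : b ≤ c) :
    seg a b * seg b c = seg a c := by
  have h3 : a ≤ c := h1.trans h2
  have e1 := aProd_mul_seg h1
  have e2 := aProd_mul_seg h2
  have e3 := aProd_mul_seg h3
  apply mul_left_cancel (a := aProd a)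
  rw [← mul_assoc, e1, e2, e3]

lemma seg_cons {a b : ℕ} (h : a < b) : seg a b = A a * seg (a + 1) b := by
  have : b - a = (b - (a+1)) + 1 := by omega
  rw [seg, this]
  rw [List.range'_succ]
  simp [seg]

def psi (m : ℕ) : FG →* FG :=
  ((MulAut.conj (aProd m)⁻¹).toMonoidHom).comp (bsPhi m)

lemma psi_apply (m : ℕ) (w : FG) :
    psi m w = (aProd m)⁻¹ * bsPhi m w * aProd m := by
  simp [psi, MulAut.conj_apply]

lemma phi_eq_psi (m : ℕ) (w : FG) :
    bsPhi m w = aProd m * psi m w * (aProd m)⁻¹ := by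
  rw [psi_apply]; group

lemma psi_A {m i : ℕ} (h : i < m) :
    psi m (A i) = (seg (i + 1) m)⁻¹ * A i * seg (i + 1) m := by
  rw [psi_apply, phi_A]
  have e1 : aProd i * seg i m = aProd m := aProd_mul_seg h.le
  have e2 : seg i m = A i * seg (i + 1) m := seg_cons h
  rw [← e1, e2]
  group

lemma psi_B {m l : ℕ} (h : l ≤ m) :
    psi m (B l) = bProd (l + 1) * seg l m := by
  rw [psi_apply, phi_B]
  have e1 : aProd l * seg l m = aProd m := aProd_mul_seg h
  rw [← e1]
  group

/-- `Qp n i = A_0^n * A_1^n * ⋯ * A_{i-1}^n`. -/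
def Qp (n i : ℕ) : FG := ((List.range i).map (fun l => A l ^ n)).prod

lemma Qp_succ (n i : ℕ) : Qp n (i + 1) = Qp n i * A i ^ n := by
  simp [Qp, List.range_succ]

lemma Qp_one (i : ℕ) : Qp 1 i = aProd i := by
  simp [Qp, aProd]

lemma phi_Apow (m i n : ℕ) : bsPhi m (A i ^ n) = aProd i * A i ^ n * (aProd i)⁻¹ := by
  rw [map_pow, phi_A, conj_pow]

lemma phi_Q (m n : ℕ) : ∀ i, bsPhi m (Qp n i) = Qp (n + 1) i * (aProd i)⁻¹ := by
  intro i
  induction i with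
  | zero => simp [Qp, aProd]
  | succ i ih =>
    rw [Qp_succ, map_mul, ih, phi_Apow, Qp_succ, aProd_succ]
    have : A i ^ (n + 1) = A i ^ n * A i := pow_succ _ _
    rw [this]
    group

/-! ### Positive words and blocks -/

def ev (u : List (ℕ ⊕ ℕ)) : FG := (u.map FreeGroup.of).prod

lemma ev_append (u v : List (ℕ ⊕ ℕ)) : ev (u ++ v) = ev u * ev v := by
  simp [ev]

def blkL (b : ℕ × List ℕ) : List (ℕ ⊕ ℕ) := Sum.inr b.1 :: b.2.map Sum.inl

def evB (b : ℕ × List ℕ) : FG := B b.1 * (b.2.map A).prod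

lemma ev_blkL (b : ℕ × List ℕ) : ev (blkL b) = evB b := by
  simp [ev, blkL, evB, B, A, List.map_map]
  rfl

def evBs (bs : List (ℕ × List ℕ)) : FG := (bs.map evB).prod

lemma evBs_append (bs cs : List (ℕ × List ℕ)) :
    evBs (bs ++ cs) = evBs bs * evBs cs := by simp [evBs]

lemma ev_flatMap (bs : List (ℕ × List ℕ)) : ev (bs.flatMap blkL) = evBs bs := by
  induction bs with
  | nil => simp [ev, evBs]
  | cons b bs ih =>
    rw [List.flatMap_cons, ev_append, ih, ev_blkL]
    simp [evBs]

def base (j : ℕ) : List (ℕ × List ℕ) := (List.range j).map (fun t => (t, []))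

lemma evBs_base (j : ℕ) : evBs (base j) = bProd j := by
  simp [evBs, base, bProd, List.map_map, evB]
  rfl

/-- The A-part of the image of a block under ψ. -/
def fA (m : ℕ) : ℕ → List ℕ → List ℕ
  | start, [] => List.range' start (m - start)
  | start, i :: rest => List.range' start (i + 1 - start) ++ i :: fA m (i + 1) rest

def imgB (m : ℕ) (b : ℕ × List ℕ) : List (ℕ × List ℕ) := base b.1 ++ [(b.1, fA m b.1 b.2)]

def Good (m k : ℕ) (bs : List (ℕ × List ℕ)) : Prop :=
  ∀ b ∈ bs, b.1 < k ∧ List.Chain (· ≤ ·) b.1 b.2 ∧ ∀ i ∈ b.2, i < m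

/-! ### The key computation -/

lemma chain_shift {a : ℕ} {l : List ℕ} (h : List.Chain (· ≤ ·) a l) :
    List.Chain (fun x y => x ≤ y + 1) (a + 1) l := by
  cases l with
  | nil => exact List.Chain.nil
  | cons b l =>
    simp only [List.Chain, List.chain_cons] at h ⊢
    exact ⟨by omega, h.2.imp (fun x y hxy => by omega)⟩

lemma chain'_of_chain {a : ℕ} {l : List ℕ} (h : List.Chain (· ≤ ·) a l) :
    List.Chain' (· ≤ ·) l := by
  cases l with
  | nil => exact List.isChain_nil
  | cons b l => exact (List.chain_cons.mp h).2

lemma seg_psiA_prod {m : ℕ} :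
    ∀ (is : List ℕ) (start : ℕ),
      List.Chain (fun a b => a ≤ b + 1) start is → List.Chain' (· ≤ ·) is →
      start ≤ m → (∀ i ∈ is, i < m) →
      seg start m * (is.map (fun i => psi m (A i))).prod = ((fA m start is).map A).prod := by
  intro is
  induction is with
  | nil => intro start _ _ _ _; simp [fA, seg]
  | cons i rest ih =>
    intro start h1 h2 hs hm
    have him : i < m := hm i (by simp)
    have hsi : start ≤ i + 1 := (List.chain_cons.mp h1).1
    have h2' : List.Chain (· ≤ ·) i rest := h2
    have hrest : List.Chain (fun a b => a ≤ b + 1) (i + 1) rest := chain_shift h2'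
    have hchain' : List.Chain' (· ≤ ·) rest := chain'_of_chain h2'
    have hm' : ∀ x ∈ rest, x < m := fun x hx => hm x (by simp [hx])
    have ihr := ih (i + 1) hrest hchain' him hm'
    have hseg : seg start (i + 1) * seg (i + 1) m = seg start m := seg_mul_seg hsi him
    rw [List.map_cons, List.prod_cons, psi_A him, fA, List.map_append, List.prod_append,
      List.map_cons, List.prod_cons, ← ihr, ← hseg]
    have hr : ((List.range' start (i + 1 - start)).map A).prod = seg start (i + 1) := rfl
    rw [hr]
    group

lemma chain_le_of_le {x b : ℕ} {l : List ℕ} (h : x ≤ b) (hc : List.Chain (· ≤ ·) b l) :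
    List.Chain (· ≤ ·) x l := by
  cases l with
  | nil => exact List.Chain.nil
  | cons c l =>
    simp only [List.Chain, List.chain_cons] at hc ⊢
    exact ⟨h.trans hc.1, hc.2⟩

lemma range'_chain : ∀ (n a x : ℕ), x ≤ a → List.Chain (· ≤ ·) x (List.range' a n)
  | 0, _, _, _ => List.Chain.nil
  | n + 1, a, x, h => by
    have : List.range' a (n + 1) = a :: List.range' (a + 1) n := rfl
    rw [this]; simp only [List.Chain, List.chain_cons]
    exact ⟨h, range'_chain n (a + 1) a (Nat.le_succ a)⟩

lemma chain_range'_append : ∀ (n a x b : ℕ) (l : List ℕ), x ≤ a → x ≤ b → a + n ≤ b + 1 →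
    List.Chain (· ≤ ·) b l → List.Chain (· ≤ ·) x (List.range' a n ++ l)
  | 0, a, x, b, l, _, h2, _, hc => chain_le_of_le h2 hc
  | n + 1, a, x, b, l, h1, _, h3, hc => by
    have : List.range' a (n + 1) = a :: List.range' (a + 1) n := rfl
    rw [this, List.cons_append]; simp only [List.Chain, List.chain_cons]
    exact ⟨h1, chain_range'_append n (a + 1) a b l (Nat.le_succ a) (by omega) (by omega) hc⟩

lemma fA_lt {m : ℕ} : ∀ (is : List ℕ) (start : ℕ), (∀ i ∈ is, i < m) →
    ∀ x ∈ fA m start is, x < m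
  | [], start, _, x, hx => by
    simp only [fA, List.mem_range'] at hx
    omega
  | i :: rest, start, h, x, hx => by
    have him : i < m := h i (by simp)
    simp only [fA, List.mem_append, List.mem_range', List.mem_cons] at hx
    rcases hx with ⟨t, ht, rfl⟩ | rfl | h3
    · omega
    · exact him
    · exact fA_lt rest (i + 1) (fun y hy => h y (by simp [hy])) x h3

lemma fA_chain_lt {m : ℕ} : ∀ (is : List ℕ) (start x : ℕ), x < start →
    List.Chain (fun a b => a ≤ b + 1) start is → List.Chain' (· ≤ ·) is →
    List.Chain (· ≤ ·) x (fA m start is)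
  | [], start, x, hx, _, _ => range'_chain _ _ _ (by omega)
  | i :: rest, start, x, hx, h1, h2 => by
    have h2' : List.Chain (· ≤ ·) i rest := h2
    have hsi : start ≤ i + 1 := (List.chain_cons.mp h1).1
    have he : fA m start (i :: rest)
        = List.range' start (i + 1 - start) ++ i :: fA m (i + 1) rest := rfl
    rw [he]
    refine chain_range'_append _ _ _ i _ (by omega) (by omega) (by omega) ?_
    exact List.chain_cons.mpr ⟨le_refl i,
      fA_chain_lt rest (i + 1) i (Nat.lt_succ_self i) (chain_shift h2') (chain'_of_chain h2')⟩

lemma fA_chain {m l : ℕ} {is : List ℕ} (h : List.Chain (· ≤ ·) l is) :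
    List.Chain (· ≤ ·) l (fA m l is) := by
  cases is with
  | nil => exact range'_chain _ _ _ le_rfl
  | cons i rest =>
    have h' := List.chain_cons.mp h
    have he : fA m l (i :: rest)
        = List.range' l (i + 1 - l) ++ i :: fA m (i + 1) rest := rfl
    rw [he]
    refine chain_range'_append _ _ _ i _ le_rfl h'.1 (by omega) ?_
    exact List.chain_cons.mpr ⟨le_rfl,
      fA_chain_lt rest (i + 1) i (Nat.lt_succ_self i) (chain_shift h'.2) (chain'_of_chain h'.2)⟩

lemma good_base {m k j : ℕ} (hj : j ≤ k) : Good m k (base j) := by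
  intro b hb
  simp only [base, List.mem_map, List.mem_range] at hb
  obtain ⟨t, ht, rfl⟩ := hb
  exact ⟨by omega, List.Chain.nil, by simp⟩

lemma good_imgBs {m k : ℕ} {bs : List (ℕ × List ℕ)} (h : Good m k bs) :
    Good m k (bs.flatMap (imgB m)) := by
  intro b hb
  rw [List.mem_flatMap] at hb
  obtain ⟨c, hc, hbc⟩ := hb
  obtain ⟨hck, hchain, hlt⟩ := h c hc
  simp only [imgB, List.mem_append, List.mem_singleton] at hbc
  rcases hbc with hb1 | rfl
  · exact good_base hck.le b hb1
  · exact ⟨hck, fA_chain hchain, fA_lt _ _ hlt⟩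

lemma psi_evB {m k : ℕ} (hk : k ≤ m) (b : ℕ × List ℕ) (hbk : b.1 < k)
    (hchain : List.Chain (· ≤ ·) b.1 b.2) (hlt : ∀ i ∈ b.2, i < m) :
    psi m (evB b) = evBs (imgB m b) := by
  obtain ⟨l, is⟩ := b
  have hlm : l < m := lt_of_lt_of_le hbk hk
  have key := seg_psiA_prod is l (List.IsChain.imp (fun a b h => by omega) hchain)
    (chain'_of_chain hchain) hlm.le hlt
  have hmap : psi m ((is.map A).prod) = (is.map (fun i => psi m (A i))).prod := by
    rw [map_list_prod, List.map_map]; rfl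
  have lhs : psi m (evB (l, is))
      = bProd (l + 1) * (seg l m * (is.map (fun i => psi m (A i))).prod) := by
    rw [evB, map_mul, psi_B hlm.le, hmap, mul_assoc]
  rw [lhs, key, imgB, evBs_append, evBs_base, bProd_succ]
  simp [evBs, evB, mul_assoc]

lemma psi_evBs {m k : ℕ} (hk : k ≤ m) : ∀ (bs : List (ℕ × List ℕ)), Good m k bs →
    psi m (evBs bs) = evBs (bs.flatMap (imgB m))
  | [], _ => by simp [evBs]
  | b :: bs, h => by
    obtain ⟨h1, h2, h3⟩ := h b (by simp)
    have : evBs (b :: bs) = evB b * evBs bs := by simp [evBs]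
    rw [this, map_mul, psi_evBs hk bs (fun c hc => h c (by simp [hc])),
      psi_evB hk b h1 h2 h3, List.flatMap_cons, evBs_append]

lemma key_lemma {m k j : ℕ} (hj : j < k) (hk : k ≤ m) :
    ∀ n : ℕ, ∃ bs, Good m k bs ∧
      (⇑(bsPhi m))^[n + 1] (B j) = Qp (n + 1) m * evBs bs * B j * (Qp (n + 1) j)⁻¹ := by
  intro n
  induction n with
  | zero =>
    refine ⟨base j, good_base hj.le, ?_⟩
    rw [Function.iterate_one, phi_B, Qp_one, Qp_one, evBs_base, bProd_succ]
    group
  | succ n ih =>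
    obtain ⟨bs, hgood, heq⟩ := ih
    refine ⟨bs.flatMap (imgB m) ++ base j, ?_, ?_⟩
    · intro b hb
      rw [List.mem_append] at hb
      rcases hb with hb | hb
      · exact good_imgBs hgood b hb
      · exact good_base hj.le b hb
    · rw [Function.iterate_succ_apply', heq]
      rw [map_mul, map_mul, map_mul, map_inv, phi_B, phi_Q, phi_Q]
      rw [phi_eq_psi m (evBs bs), psi_evBs hk bs hgood]
      rw [evBs_append, evBs_base, bProd_succ]
      group

end BS

/-- For every `n ≥ 1` and every `1 ≤ j ≤ k` (0-indexed: `j < k`), there is a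
positive word `u` (a product of generators with no inverses) such that
`φⁿ(B_j) = A_1ⁿ ⋯ A_mⁿ · u · B_j · (A_1ⁿ ⋯ A_{j-1}ⁿ)⁻¹`. -/
theorem bsPhi_iterate_B_form (m k n j : ℕ) (hn : 1 ≤ n) (hj : j < k) (hk : k ≤ m) :
    ∃ u : List (ℕ ⊕ ℕ),
      (⇑(bsPhi m))^[n] (B j) =
        ((List.range m).map (fun i => A i ^ n)).prod *
          (u.map FreeGroup.of).prod * B j *
          (((List.range j).map (fun i => A i ^ n)).prod)⁻¹ := by
  obtain ⟨n', rfl⟩ : ∃ n', n = n' + 1 := ⟨n - 1, by omega⟩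
  obtain ⟨bs, _, heq⟩ := BS.key_lemma hj hk n'
  refine ⟨bs.flatMap BS.blkL, ?_⟩
  rw [heq]
  show _ = BS.Qp (n' + 1) m * BS.ev (bs.flatMap BS.blkL) * B j * (BS.Qp (n' + 1) j)⁻¹
  rw [BS.ev_flatMap]
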